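/- Any Borel measurable group homomorphism from a locally compact Polish group into a Polish group is continuous. -/

import Mathlib

open MeasureTheory TopologicalSpace Set Pointwise


/-- Any Borel measurable group homomorphism from a locally compact Polish group into a
Polish group is continuous. -/
theorem measurable_hom_continuous
    {G H : Type*} [TopologicalSpace G] [PolishSpace G] [Group G] [IsTopologicalGroup G]
    [LocallyCompactSpace G] [MeasurableSpace G] [BorelSpace G]
    [TopologicalSpace H] [PolishSpace H] [Group H] [IsTopologicalGroup H]
    [MeasurableSpace H] [BorelSpace H]
    (φ : G →* H) (hφ : Measurable φ) :
    Continuous φ := by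
  apply continuous_of_continuousAt_one
  rw [ContinuousAt, map_one, Filter.Tendsto]
  intro V hV
  rw [Filter.mem_map]
  obtain ⟨W, hW, hWV⟩ := exists_nhds_split_inv hV
  obtain ⟨U, hUW, hUopen, hU1⟩ := mem_nhds_iff.1 hW
  have : Nonempty H := ⟨1⟩
  set d : ℕ → H := denseSeq H with hd_def
  have hd : DenseRange d := denseRange_denseSeq H
  set μ : Measure G := Measure.haar with hμ
  set E : ℕ × ℕ → Set G := fun p => φ ⁻¹' (U * {d p.1}) ∩ compactCovering G p.2 with hE
  have hcover : (⋃ p, E p) = univ := by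
    ext x
    simp only [mem_iUnion, mem_univ, iff_true]
    have : ∃ n, d n ∈ U⁻¹ * {φ x} := by
      have hopen : IsOpen (U⁻¹ * {φ x}) := hUopen.inv.mul_right
      have hne : (U⁻¹ * {φ x}).Nonempty := ⟨φ x, 1, by simpa using hU1, φ x, rfl, one_mul _⟩
      exact hd.exists_mem_open hopen hne
    obtain ⟨n, u, hu, y, hy, huy⟩ := this
    rw [mem_singleton_iff] at hy
    subst hy
    obtain ⟨m, hm⟩ := exists_mem_compactCovering x
    refine ⟨⟨n, m⟩, ⟨u⁻¹, by simpa using hu, d n, rfl, ?_⟩, hm⟩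
    rw [← huy]
    group
  have hmeas : ∀ p, MeasurableSet (E p) := fun p =>
    (hφ (hUopen.mul_right).measurableSet).inter
      (isCompact_compactCovering G p.2).measurableSet
  have hpos : ∃ p, 0 < μ (E p) := by
    by_contra h
    push_neg at h
    simp only [nonpos_iff_eq_zero] at h
    have h0 : μ (⋃ p, E p) = 0 := measure_iUnion_null h
    rw [hcover] at h0
    exact (IsOpen.measure_ne_zero μ isOpen_univ univ_nonempty) h0
  obtain ⟨p, hp⟩ := hpos
  have hSt : E p / E p ∈ nhds (1 : G) :=
    MeasureTheory.Measure.div_mem_nhds_one_of_haar_pos μ (E p) (hmeas p) hp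
  refine Filter.mem_of_superset hSt ?_
  rintro z ⟨x, hx, y, hy, rfl⟩
  obtain ⟨⟨ux, hux, wx, hwx, hx'⟩, -⟩ := hx
  obtain ⟨⟨uy, huy, wy, hwy, hy'⟩, -⟩ := hy
  rw [mem_singleton_iff] at hwx hwy
  subst hwx; subst hwy
  simp only [mem_preimage]
  have : φ (x / y) = ux / uy := by
    rw [map_div, ← hx', ← hy']
    show ux * d p.1 / (uy * d p.1) = ux / uy
    rw [div_eq_mul_inv, mul_inv_rev, div_eq_mul_inv]
    group
  rw [this]
  exact hWV _ (hUW hux) _ (hUW huy)
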